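/- arXiv:2505.15992 — 2 statements merged into one kernel-verified Lean document; each statement's English description precedes it below -/
import Mathlib

section
/- Two Boolean vectors u, v ∈ {0,1}^d are orthogonal (∑_j u[j]·v[j] = 0) if and only if d_H(μ(u), τ(v)) ≤ d, where μ and τ are applied letterwise (μ(0)=0111000, μ(1)=0001000, τ(0)=0011000, τ(1)=1111000) and d_H denotes Hamming distance between the resulting strings of length 7d. -/
/-- `μ(0) = 0111000`, `μ(1) = 0001000`. -/
def muMorph : Bool → Fin 7 → Bool
  | false => ![false, true, true, true, false, false, false]
  | true  => ![false, false, false, true, false, false, false]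

/-- `τ(0) = 0011000`, `τ(1) = 1111000`. -/
def tauMorph : Bool → Fin 7 → Bool
  | false => ![false, false, true, true, false, false, false]
  | true  => ![true, true, true, true, false, false, false]

/-- Letterwise application of a morphism to a Boolean vector of length `d`,
producing a string of length `7d` (indexed by `Fin d × Fin 7`). -/
def applyMorph (f : Bool → Fin 7 → Bool) {d : ℕ} (u : Fin d → Bool) :
    Fin d × Fin 7 → Bool :=
  fun p => f (u p.1) p.2

/-- Two Boolean vectors `u, v ∈ {0,1}^d` are orthogonal iff
`d_H(μ(u), τ(v)) ≤ d`. -/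
theorem orthogonal_iff_hamming_le {d : ℕ} (u v : Fin d → Bool) :
    (∑ j : Fin d, (if u j then 1 else 0) * (if v j then 1 else 0) = 0) ↔
    hammingDist (applyMorph muMorph u) (applyMorph tauMorph v) ≤ d := by
  have hletter : ∀ a b : Bool,
      hammingDist (muMorph a) (tauMorph b) = if a && b then 3 else 1 := by
    decide
  have hsplit : hammingDist (applyMorph muMorph u) (applyMorph tauMorph v)
      = ∑ j : Fin d, hammingDist (muMorph (u j)) (tauMorph (v j)) := by
    simp only [hammingDist, Finset.card_filter]
    simp only [applyMorph]
    rw [Fintype.sum_prod_type]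
    rfl
  rw [hsplit]
  simp only [hletter]
  have key : (∑ j : Fin d, if u j && v j then 3 else 1)
      = d + 2 * ∑ j : Fin d, (if u j then 1 else 0) * (if v j then 1 else 0) := by
    have : (∑ j : Fin d, if u j && v j then 3 else 1)
        = ∑ j : Fin d, (1 + 2 * ((if u j then 1 else 0) * (if v j then 1 else 0))) :=
      Finset.sum_congr rfl (fun j _ => by cases u j <;> cases v j <;> simp)
    rw [this, Finset.sum_add_distrib, ← Finset.mul_sum]
    simp
  rw [key]
  constructor
  · intro h; omega
  · intro h; omega
end

section
/- Consider Boolean vectors u, v ∈ {0,1}^d and morphisms τ_i, τ_j (i ≠ j) from the Rk-LCSS gadget, where d_H(τ_i(a), τ_j(b)) = 3 if (a,b) ≠ (1,1) and 5 if (a,b) = (1,1). Then d_H(τ_i(u), τ_j(v)) = 3d + 2·|{p : u[p] = v[p] = 1}|; in particular, d_H(τ_i(u), τ_j(v)) ≤ 3d if and only if u and v are orthogonal. -/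
/-- Hamming distance between two lists (counting differing aligned positions). -/
def listHamming (s t : List Bool) : ℕ :=
  (List.zipWith (fun a b => if a = b then 0 else 1) s t).sum

lemma listHamming_append (s1 s2 t1 t2 : List Bool) (h : s1.length = t1.length) :
    listHamming (s1 ++ s2) (t1 ++ t2) = listHamming s1 t1 + listHamming s2 t2 := by
  unfold listHamming
  rw [List.zipWith_append h, List.sum_append]

lemma listHamming_flatMap (ti tj : Bool → List Bool)
    (hlen : ∀ a b, (ti a).length = (tj b).length)
    (hdist : ∀ a b : Bool, listHamming (ti a) (tj b) = if a ∧ b then 5 else 3) :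
    ∀ (l1 l2 : List Bool), l1.length = l2.length →
      listHamming (l1.flatMap ti) (l2.flatMap tj) =
        3 * l1.length + 2 * (l1.zip l2).countP (fun p => p.1 && p.2) := by
  intro l1
  induction l1 with
  | nil =>
      intro l2 h
      simp only [List.length_nil] at h
      rw [List.length_eq_zero_iff.mp h.symm]
      simp [listHamming]
  | cons a l ih =>
    intro l2 h
    cases l2 with
    | nil => simp at h
    | cons b l2' =>
      simp only [List.flatMap_cons, List.zip_cons_cons, List.countP_cons, List.length_cons]
      rw [listHamming_append _ _ _ _ (hlen a b), ih l2' (by simpa using h), hdist a b]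
      by_cases hab : a ∧ b
      · simp [hab.1, hab.2]; ring
      · have : ¬ (a && b) = true := by
          simp only [Bool.and_eq_true]; exact hab
        simp [hab, this]; ring

lemma countP_ofFn {α : Type*} (p : α → Bool) :
    ∀ (d : ℕ) (f : Fin d → α), (List.ofFn f).countP p = ∑ i : Fin d, if p (f i) then 1 else 0 := by
  intro d
  induction d with
  | zero => intro f; simp
  | succ n ih =>
    intro f
    rw [List.ofFn_succ, List.countP_cons, ih, Fin.sum_univ_succ]
    by_cases h : p (f 0) = true <;> simp [h] <;> ring

/-- For morphisms `τ_i, τ_j` (`i ≠ j`) of the `Rk`-LCSS gadget, with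
`d_H(τ_i(a), τ_j(b)) = 3` unless `a = b = 1` in which case it is `5`, we get
`d_H(τ_i(u), τ_j(v)) = 3d + 2·|{p : u[p] = v[p] = 1}|`; in particular,
`d_H(τ_i(u), τ_j(v)) ≤ 3d` iff `u` and `v` are orthogonal. -/
theorem rkLCSS_gadget_hamming {d : ℕ} (u v : Fin d → Bool)
    (ti tj : Bool → List Bool)
    (hlen : ∀ a b, (ti a).length = (tj b).length)
    (hdist : ∀ a b : Bool, listHamming (ti a) (tj b) = if a ∧ b then 5 else 3) :
    listHamming ((List.ofFn u).flatMap ti) ((List.ofFn v).flatMap tj) =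
      3 * d + 2 * (Finset.univ.filter (fun p : Fin d => u p = true ∧ v p = true)).card ∧
    (listHamming ((List.ofFn u).flatMap ti) ((List.ofFn v).flatMap tj) ≤ 3 * d ↔
      ∀ p : Fin d, ¬ (u p = true ∧ v p = true)) := by
  have hz : (List.ofFn u).zip (List.ofFn v) = List.ofFn (fun p => (u p, v p)) := by
    apply List.ext_getElem <;> simp
  have hcount : ((List.ofFn u).zip (List.ofFn v)).countP (fun p => p.1 && p.2) =
      (Finset.univ.filter (fun p : Fin d => u p = true ∧ v p = true)).card := by
    rw [hz, countP_ofFn, Finset.card_filter]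
    apply Finset.sum_congr rfl
    intro p _
    by_cases h0 : u p = true ∧ v p = true
    · simp [h0.1, h0.2]
    · have : ¬ (u p && v p) = true := by simp only [Bool.and_eq_true]; exact h0
      simp [this, h0]
  have hmain := listHamming_flatMap ti tj hlen hdist (List.ofFn u) (List.ofFn v) (by simp)
  rw [hcount] at hmain
  simp only [List.length_ofFn] at hmain
  refine ⟨hmain, ?_⟩
  rw [hmain]
  constructor
  · intro h p hp
    have : (Finset.univ.filter (fun p : Fin d => u p = true ∧ v p = true)).card = 0 := by omega
    have := Finset.card_eq_zero.mp this
    have := Finset.filter_eq_empty_iff.mp this (Finset.mem_univ p)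
    exact this hp
  · intro h
    have : (Finset.univ.filter (fun p : Fin d => u p = true ∧ v p = true)) = ∅ :=
      Finset.filter_eq_empty_iff.mpr (fun p _ => h p)
    rw [this]; simp
end
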